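/- Let f : X → ℝ ∪ {±∞} be a proper lsc convex function on a finite-dimensional Hilbert space X and let (x̄, v̄) be in the graph of ∂f. Then the tangent cone to the set ∂f*(v̄) = (∂f)⁻¹(v̄) at x̄ is contained in the kernel of the second subderivative: T_{∂f*(v̄)}(x̄) ⊂ {w ∈ X : d²f(x̄, v̄)(w) = 0}. -/
import Mathlib


open Filter Topology
open scoped RealInnerProductSpace

variable {X : Type*} [NormedAddCommGroup X] [InnerProductSpace ℝ X] [FiniteDimensional ℝ X]

/-- The convex subdifferential of an extended-real-valued function. -/
def subdiff (f : X → EReal) (x : X) : Set X :=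
  {v | ∀ y, f x + ((⟪v, y - x⟫ : ℝ) : EReal) ≤ f y}

/-- The contingent (tangent) cone to `Ω` at `x`. -/
def contingentCone (Ω : Set X) (x : X) : Set X :=
  {w | ∃ t : ℕ → ℝ, ∃ ws : ℕ → X, (∀ k, 0 < t k) ∧ Tendsto t atTop (𝓝 0) ∧
    Tendsto ws atTop (𝓝 w) ∧ ∀ k, x + t k • ws k ∈ Ω}

/-- The second subderivative
`d²f(x, v)(w) = liminf_{t↓0, w'→w} (f(x + t w') - f(x) - t ⟪v, w'⟫) / (t²/2)`. -/
noncomputable def secondSubderivative (f : X → EReal) (x v : X) (w : X) : EReal :=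
  Filter.liminf (fun p : ℝ × X =>
      ((2 / p.1 ^ 2 : ℝ) : EReal) *
        (f (x + p.1 • p.2) - f x - ((p.1 * ⟪v, p.2⟫ : ℝ) : EReal)))
    ((𝓝[>] (0 : ℝ)) ×ˢ 𝓝 w)

/-- For a proper lsc convex `f` with `v̄ ∈ ∂f(x̄)`, the tangent cone to `(∂f)⁻¹(v̄)` at `x̄` is
contained in the kernel of the second subderivative `d²f(x̄, v̄)`. -/
theorem tangentCone_subset_ker_secondSubderivative (f : X → EReal)
    (hproper_bot : ∀ x, f x ≠ ⊥) (hproper_top : ∃ x, f x ≠ ⊤)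
    (hlsc : LowerSemicontinuous f)
    (hconv : ∀ x₁ x₂ : X, ∀ a b : ℝ, 0 ≤ a → 0 ≤ b → a + b = 1 →
      f (a • x₁ + b • x₂) ≤ (a : EReal) * f x₁ + (b : EReal) * f x₂)
    (xb vb : X) (hvb : vb ∈ subdiff f xb) :
    contingentCone {x | vb ∈ subdiff f x} xb ⊆
      {w | secondSubderivative f xb vb w = 0} := by
  intro w hw
  obtain ⟨t, ws, htpos, ht0, hws, hmem⟩ := hw
  set F := (𝓝[>] (0 : ℝ)) ×ˢ (𝓝 w) with hF
  set g : ℝ × X → EReal := fun p : ℝ × X =>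
    ((2 / p.1 ^ 2 : ℝ) : EReal) *
      (f (xb + p.1 • p.2) - f xb - ((p.1 * ⟪vb, p.2⟫ : ℝ) : EReal)) with hg
  -- `f xb` is a real number
  have hxt : f xb ≠ ⊤ := by
    obtain ⟨y, hy⟩ := hproper_top
    intro h
    have h2 := hvb y
    rw [h, EReal.top_add_of_ne_bot (EReal.coe_ne_bot _)] at h2
    exact hy (top_le_iff.mp h2)
  obtain ⟨r, hr⟩ : ∃ r : ℝ, f xb = (r : EReal) :=
    ⟨(f xb).toReal, (EReal.coe_toReal hxt (hproper_bot xb)).symm⟩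
  -- the basic subgradient lower estimate
  have key : ∀ (s : ℝ) (u : X), ((r + s * ⟪vb, u⟫ : ℝ) : EReal) ≤ f (xb + s • u) := by
    intro s u
    have h := hvb (xb + s • u)
    rw [add_sub_cancel_left, real_inner_smul_right, hr, ← EReal.coe_add] at h
    exact h
  -- lower bound : the quotient is nonnegative on the filter
  have hge : ∀ᶠ p in F, (0 : EReal) ≤ g p := by
    have hpos : ∀ᶠ p : ℝ × X in F, 0 < p.1 :=
      Eventually.prod_inl (eventually_mem_nhdsWithin) _
    filter_upwards [hpos] with p hp
    have h2 : (0 : EReal) + ((p.1 * ⟪vb, p.2⟫ : ℝ) : EReal) ≤ f (xb + p.1 • p.2) - (r : EReal) := by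
      rw [zero_add, EReal.le_sub_iff_add_le (Or.inl (EReal.coe_ne_bot r))
        (Or.inl (EReal.coe_ne_top r)), ← EReal.coe_add]
      have : (p.1 * ⟪vb, p.2⟫ + r : ℝ) = (r + p.1 * ⟪vb, p.2⟫ : ℝ) := by ring
      rw [this]
      exact key p.1 p.2
    have h3 : (0 : EReal) ≤ f (xb + p.1 • p.2) - (r : EReal) - ((p.1 * ⟪vb, p.2⟫ : ℝ) : EReal) :=
      (EReal.le_sub_iff_add_le (Or.inl (EReal.coe_ne_bot _))
        (Or.inl (EReal.coe_ne_top _))).mpr h2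
    have h4 : (0 : EReal) ≤ ((2 / p.1 ^ 2 : ℝ) : EReal) := by
      exact_mod_cast le_of_lt (by positivity : (0:ℝ) < 2 / p.1 ^ 2)
    simp only [hg]
    rw [hr]
    exact mul_nonneg h4 h3
  have hlb : (0 : EReal) ≤ Filter.liminf g F := Filter.le_liminf_of_le (by isBoundedDefault) hge
  -- the sequence from the tangent cone
  have hseq : Tendsto (fun k => (t k, ws k)) atTop F := by
    refine Tendsto.prodMk ?_ hws
    exact tendsto_nhdsWithin_of_tendsto_nhds_of_eventually_within _ ht0
      (Eventually.of_forall htpos)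
  have hzero : ∀ k, g (t k, ws k) = 0 := by
    intro k
    have hx := hmem k
    set c : ℝ := t k * ⟪vb, ws k⟫ with hc
    have h1 : ((r + c : ℝ) : EReal) ≤ f (xb + t k • ws k) := key _ _
    have h2 : f (xb + t k • ws k) ≤ ((r + c : ℝ) : EReal) := by
      have h := hx xb
      have hin : ⟪vb, xb - (xb + t k • ws k)⟫ = -c := by
        rw [sub_add_eq_sub_sub, sub_self, zero_sub, inner_neg_right, real_inner_smul_right]
      rw [hin, hr] at h
      have h5 : f (xb + t k • ws k) ≤ (r : EReal) - ((-c : ℝ) : EReal) :=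
        (EReal.le_sub_iff_add_le (Or.inl (EReal.coe_ne_bot _))
          (Or.inl (EReal.coe_ne_top _))).mpr h
      rwa [← EReal.coe_sub, sub_neg_eq_add] at h5
    have hfx : f (xb + t k • ws k) = ((r + c : ℝ) : EReal) := le_antisymm h2 h1
    simp only [hg]
    show ((2 / (t k) ^ 2 : ℝ) : EReal) *
        (f (xb + t k • ws k) - f xb - ((t k * ⟪vb, ws k⟫ : ℝ) : EReal)) = 0
    rw [hfx, hr, ← hc, ← EReal.coe_sub, ← EReal.coe_sub]
    have : (r + c - r - c : ℝ) = 0 := by ring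
    rw [this, EReal.coe_zero, mul_zero]
  have hub : Filter.liminf g F ≤ 0 := by
    have h1 : Filter.liminf g F ≤ Filter.liminf g (map (fun k => (t k, ws k)) atTop) :=
      liminf_le_liminf_of_le hseq
    rw [← Filter.liminf_comp] at h1
    have h2 : (g ∘ fun k => (t k, ws k)) = fun _ => (0 : EReal) := funext fun k => hzero k
    rw [h2, liminf_const] at h1
    exact h1
  exact le_antisymm hub hlb
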